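/- arXiv:1209.4190 — 2 statements merged into one kernel-verified Lean document; each statement's English description precedes it below -/
import Mathlib

section
/- If π is a 2d-cycle on I±, then the Hilbert space H = ℂ^{2d} ⊗ ℓ²(ℤ^d) is the orthogonal direct sum of the invariant subspaces H^τ_x over a suitable index set; consequently U_D(C_π) is a direct sum of finite-dimensional unitaries and hence has pure point spectrum for every choice of diagonal unitary D. -/
noncomputable section
open scoped InnerProductSpace ENNReal

/-- Coin index set, modeling I_± = {±1,…,±d}: a direction in `Fin d` and a sign. -/
abbrev Coin (d : ℕ) := Fin d × Bool

/-- The lattice ℤ^d (with the sup norm from the Pi instance). -/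
abbrev Site (d : ℕ) := Fin d → ℤ

/-- The Hilbert space ℂ^{2d} ⊗ ℓ²(ℤ^d), modeled as ℓ² over Coin d × ℤ^d. -/
abbrev WalkH (d : ℕ) := lp (fun _ : Coin d × Site d => ℂ) 2

/-- The jump function r(τ) = sign(τ) e_{|τ|}. -/
def jump (d : ℕ) (τ : Coin d) : Site d := (if τ.2 then (1 : ℤ) else -1) • Pi.single τ.1 1

/-- The canonical basis vector |τ, x⟩. -/
def bv (d : ℕ) (τ : Coin d) (x : Site d) : WalkH d := lp.single 2 (τ, x) 1

/-- The permutation coin matrix C_π = Σ_τ |π(τ)⟩⟨τ|. -/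
def permCoin (d : ℕ) (π : Equiv.Perm (Coin d)) : Matrix (Coin d) (Coin d) ℂ :=
  fun τ σ => if τ = π σ then 1 else 0

/-- The cyclic subspace H^τ_x = span{|π^k(τ), x + Σ_{s=1}^k r(π^s(τ))⟩ : 0 ≤ k ≤ 2d−1}. -/
def cycSubspace (d : ℕ) (π : Equiv.Perm (Coin d)) (τ : Coin d) (x : Site d) :
    Submodule ℂ (WalkH d) :=
  Submodule.span ℂ
    { v | ∃ k < 2 * d,
        v = bv d ((π ^ k) τ) (x + ∑ s ∈ Finset.range k, jump d ((π ^ (s + 1)) τ)) }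

namespace Localized

lemma coin_card (d : ℕ) : Fintype.card (Coin d) = 2 * d := by
  simp [Fintype.card_prod, mul_comm]

lemma pow_bij (d : ℕ) (π : Equiv.Perm (Coin d))
    (hπ : ∀ σ τ : Coin d, ∃ k < 2 * d, (π ^ k) τ = σ) (τ : Coin d) :
    Function.Bijective (fun k : Fin (2 * d) => (π ^ (k : ℕ)) τ) := by
  rw [Fintype.bijective_iff_surjective_and_card]
  constructor
  · intro σ
    obtain ⟨k, hk, hkeq⟩ := hπ σ τ
    exact ⟨⟨k, hk⟩, hkeq⟩
  · simp [coin_card, mul_comm]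

lemma pow_inj (d : ℕ) (π : Equiv.Perm (Coin d))
    (hπ : ∀ σ τ : Coin d, ∃ k < 2 * d, (π ^ k) τ = σ) (τ : Coin d)
    {k m : ℕ} (hk : k < 2 * d) (hm : m < 2 * d) (h : (π ^ k) τ = (π ^ m) τ) : k = m := by
  have := (pow_bij d π hπ τ).injective (a₁ := ⟨k, hk⟩) (a₂ := ⟨m, hm⟩) h
  simpa using congrArg Fin.val this

lemma pow_period (d : ℕ) (π : Equiv.Perm (Coin d))
    (hπ : ∀ σ τ : Coin d, ∃ k < 2 * d, (π ^ k) τ = σ) (τ : Coin d) :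
    (π ^ (2 * d)) τ = τ := by
  obtain ⟨k, hk, hkeq⟩ := hπ ((π ^ (2 * d)) τ) τ
  rcases Nat.eq_zero_or_pos k with h0 | h0
  · subst h0; simpa using hkeq.symm
  · exfalso
    have hkey : (π ^ (2 * d - k)) ((π ^ k) τ) = (π ^ 0) ((π ^ k) τ) := by
      rw [← Equiv.Perm.mul_apply, ← pow_add, Nat.sub_add_cancel hk.le, ← hkeq, pow_zero,
        Equiv.Perm.one_apply]
    have := pow_inj d π hπ ((π ^ k) τ) (by omega) (by omega) hkey
    omega

lemma jump_total (d : ℕ) : ∑ σ : Coin d, jump d σ = 0 := by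
  rw [Fintype.sum_prod_type]
  refine Finset.sum_eq_zero fun i _ => ?_
  rw [Fintype.sum_bool]
  simp [jump]

lemma jump_sum (d : ℕ) (π : Equiv.Perm (Coin d))
    (hπ : ∀ σ τ : Coin d, ∃ k < 2 * d, (π ^ k) τ = σ) (τ : Coin d) :
    ∑ s ∈ Finset.range (2 * d), jump d ((π ^ (s + 1)) τ) = 0 := by
  have hb : Function.Bijective (fun k : Fin (2 * d) => (π ^ ((k : ℕ) + 1)) τ) := by
    have h1 := pow_bij d π hπ (π τ)
    have h2 : (fun k : Fin (2 * d) => (π ^ ((k : ℕ) + 1)) τ)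
        = fun k : Fin (2 * d) => (π ^ (k : ℕ)) (π τ) := by
      funext k
      rw [pow_succ, Equiv.Perm.mul_apply]
    rw [h2]; exact h1
  rw [← Fin.sum_univ_eq_sum_range (fun s => jump d ((π ^ (s + 1)) τ))]
  rw [Fintype.sum_bijective _ hb _ (fun σ => jump d σ) (fun k => rfl)]
  exact jump_total d

end Localized

set_option maxHeartbeats 1000000 in
/-- if π is a 2d-cycle, then H is the orthogonal direct sum of the
invariant subspaces H^τ_x over a suitable index set; consequently U_D(C_π) is
pure point: H has an orthonormal basis of eigenvectors of U_D(C_π). -/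
theorem fully_localized_walk_pure_point (d : ℕ) (hd : 1 ≤ d) (π : Equiv.Perm (Coin d))
    (hπ : ∀ σ τ : Coin d, ∃ k < 2 * d, (π ^ k) τ = σ)
    (D U : WalkH d →L[ℂ] WalkH d)
    (hDu : D ∈ unitary (WalkH d →L[ℂ] WalkH d))
    (hUu : U ∈ unitary (WalkH d →L[ℂ] WalkH d))
    (hD : ∀ (τ : Coin d) (x : Site d), ∃ θ : ℝ,
      D (bv d τ x) = Complex.exp (Complex.I * θ) • bv d τ x)
    (hU : ∀ (σ : Coin d) (y : Site d),
      U (bv d σ y) = ∑ τ : Coin d, permCoin d π τ σ • bv d τ (y + jump d τ)) :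
    (∃ Idx : Set (Coin d × Site d),
      (∀ p ∈ Idx, ∀ q ∈ Idx, p ≠ q →
        ∀ u ∈ cycSubspace d π p.1 p.2, ∀ w ∈ cycSubspace d π q.1 q.2, ⟪u, w⟫_ℂ = 0) ∧
      (⨆ p ∈ Idx, cycSubspace d π p.1 p.2).topologicalClosure = ⊤) ∧
    ∃ b : (Coin d × Site d) → WalkH d,
      Orthonormal ℂ b ∧
      (∀ i, ∃ c : ℂ, (D * U) (b i) = c • b i) ∧
      (Submodule.span ℂ (Set.range b)).topologicalClosure = ⊤ := by
  classical
  have hn0 : 0 < 2 * d := by omega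
  have hn0' : ((2 * d : ℕ) : ℂ) ≠ 0 := Nat.cast_ne_zero.mpr (by omega)
  -- basic facts about the canonical basis vectors
  have hip : ∀ p q : Coin d × Site d, ⟪bv d p.1 p.2, bv d q.1 q.2⟫_ℂ = if p = q then 1 else 0 := by
    intro p q
    unfold bv
    rw [lp.inner_single_left]
    rcases eq_or_ne p q with h | h
    · subst h
      rw [if_pos rfl, lp.single_apply_self]
      simp
    · rw [if_neg h, lp.single_apply_ne _ _ _ (fun hc => h (by simpa using hc))]
      simp
  have hip' : ∀ (σ τ : Coin d) (xx yy : Site d),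
      ⟪bv d σ xx, bv d τ yy⟫_ℂ = if ((σ, xx) : Coin d × Site d) = (τ, yy) then 1 else 0 :=
    fun σ τ xx yy => hip (σ, xx) (τ, yy)
  have dspan0 : (Submodule.span ℂ
      (Set.range fun p : Coin d × Site d => bv d p.1 p.2)).topologicalClosure = ⊤ := by
    rw [Submodule.topologicalClosure_eq_top_iff, Submodule.eq_bot_iff]
    intro f hf
    apply lp.ext
    funext i
    have h1 := (Submodule.mem_orthogonal _ f).mp hf (bv d i.1 i.2)
      (Submodule.subset_span ⟨i, rfl⟩)
    unfold bv at h1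
    rw [lp.inner_single_left] at h1
    simpa using h1
  -- the distinguished coin and the running-sum of jumps
  set τ₀ : Coin d := ((⟨0, hd⟩ : Fin d), true) with hτ₀def
  set S : ℕ → Site d := fun k => ∑ s ∈ Finset.range k, jump d ((π ^ (s + 1)) τ₀) with hS
  have hS0 : S 0 = 0 := by simp [hS]
  have hSn : S (2 * d) = 0 := Localized.jump_sum d π hπ τ₀
  have hSsucc : ∀ k, S (k + 1) = S k + jump d ((π ^ (k + 1)) τ₀) :=
    fun k => Finset.sum_range_succ _ k
  have hτn : (π ^ (2 * d)) τ₀ = τ₀ := Localized.pow_period d π hπ τ₀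
  have hptinj : ∀ (x x' : Site d) (k m : ℕ), k < 2 * d → m < 2 * d →
      (((π ^ k) τ₀, x + S k) : Coin d × Site d) = ((π ^ m) τ₀, x' + S m) → k = m ∧ x = x' := by
    intro x x' k m hk hm h
    have h1 : (π ^ k) τ₀ = (π ^ m) τ₀ := congrArg Prod.fst h
    have hkm : k = m := Localized.pow_inj d π hπ τ₀ hk hm h1
    subst hkm
    have h2 : x + S k = x' + S k := congrArg Prod.snd h
    exact ⟨rfl, by simpa using h2⟩
  -- the one-step action of D * U
  have hstep : ∀ (σ : Coin d) (y : Site d), ∃ c : ℂ, ‖c‖ = 1 ∧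
      (D * U) (bv d σ y) = c • bv d (π σ) (y + jump d (π σ)) := by
    intro σ y
    have hU1 : U (bv d σ y) = bv d (π σ) (y + jump d (π σ)) := by
      rw [hU σ y, Finset.sum_eq_single (π σ)]
      · simp [permCoin]
      · intro τ _ hτ
        simp [permCoin, hτ]
      · intro h
        exact absurd (Finset.mem_univ _) h
    obtain ⟨θ, hθ⟩ := hD (π σ) (y + jump d (π σ))
    refine ⟨Complex.exp (Complex.I * θ), ?_, ?_⟩
    · rw [Complex.norm_exp]
      simp [Complex.mul_re]
    · rw [ContinuousLinearMap.mul_apply, hU1, hθ]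
  choose c hcabs hcstep using hstep
  set a : Site d → ℕ → ℂ := fun x k => c ((π ^ k) τ₀) (x + S k) with ha
  have haabs : ∀ x k, ‖a x k‖ = 1 := fun x k => hcabs _ _
  have hDUpt : ∀ (x : Site d) (k : ℕ),
      (D * U) (bv d ((π ^ k) τ₀) (x + S k)) = a x k • bv d ((π ^ (k + 1)) τ₀) (x + S (k + 1)) := by
    intro x k
    have hcoin : π ((π ^ k) τ₀) = (π ^ (k + 1)) τ₀ := by
      rw [pow_succ', Equiv.Perm.mul_apply]
    have hsite : x + S k + jump d ((π ^ (k + 1)) τ₀) = x + S (k + 1) := by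
      rw [hSsucc, add_assoc]
    rw [hcstep ((π ^ k) τ₀) (x + S k), hcoin, hsite]
  -- phases and eigenvalues
  set P : Site d → ℂ := fun x => ∏ k ∈ Finset.range (2 * d), a x k with hP
  have hPabs : ∀ x, ‖P x‖ = 1 := by
    intro x
    rw [hP]
    dsimp only
    rw [norm_prod]
    exact Finset.prod_eq_one fun k _ => haabs x k
  have hPne : ∀ x, P x ≠ 0 := by
    intro x h
    have := hPabs x
    rw [h] at this
    simp at this
  set ω : ℂ := Complex.exp (2 * Real.pi * Complex.I / ((2 * d : ℕ) : ℂ)) with hω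
  have hωprim : IsPrimitiveRoot ω (2 * d) := Complex.isPrimitiveRoot_exp (2 * d) (by omega)
  have hωn : ω ^ (2 * d) = 1 := hωprim.pow_eq_one
  have hωne : ω ≠ 0 := by
    intro h
    rw [h, zero_pow (by omega : 2 * d ≠ 0)] at hωn
    exact zero_ne_one hωn
  set μ : Site d → ℂ := fun x => Complex.exp (Complex.log (P x) / ((2 * d : ℕ) : ℂ)) with hμ
  have hμne : ∀ x, μ x ≠ 0 := fun x => Complex.exp_ne_zero _
  have hμn : ∀ x, μ x ^ (2 * d) = P x := by
    intro x
    rw [hμ]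
    dsimp only
    rw [← Complex.exp_nat_mul]
    rw [show ((2 * d : ℕ) : ℂ) * (Complex.log (P x) / ((2 * d : ℕ) : ℂ)) = Complex.log (P x) from by
      rw [mul_comm, div_mul_cancel₀ _ hn0']]
    exact Complex.exp_log (hPne x)
  have hμabs : ∀ x, ‖μ x‖ = 1 := by
    intro x
    rw [hμ]
    dsimp only
    rw [Complex.norm_exp]
    have h1 : (Complex.log (P x) / ((2 * d : ℕ) : ℂ)).re = 0 := by
      rw [Complex.div_re]
      simp [Complex.log_re, hPabs x]
    rw [h1, Real.exp_zero]
  have hωabs : ‖ω‖ = 1 := by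
    rw [hω, Complex.norm_exp]
    have h1 : (2 * (Real.pi : ℂ) * Complex.I / ((2 * d : ℕ) : ℂ)).re = 0 := by
      simp [Complex.div_re]
    rw [h1, Real.exp_zero]
  set lam : Site d → ℕ → ℂ := fun x j => ω ^ j * μ x with hlam
  have hμabs2 : ∀ x j, ‖lam x j‖ = 1 := by
    intro x j
    rw [hlam]
    dsimp only
    rw [norm_mul, norm_pow, hωabs, hμabs, one_pow, one_mul]
  have hlamne : ∀ x j, lam x j ≠ 0 := by
    intro x j h
    have := hμabs2 x j
    rw [h] at this
    simp at this
  have hlamn : ∀ x j, lam x j ^ (2 * d) = P x := by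
    intro x j
    rw [hlam]
    dsimp only
    rw [mul_pow, ← pow_mul, mul_comm j (2 * d), pow_mul, hωn, one_pow, one_mul, hμn]
  have hconjlam : ∀ x j, (starRingEnd ℂ) (lam x j) = (lam x j)⁻¹ := by
    intro x j
    rw [Complex.inv_eq_conj]
    rw [hμabs2]
  set β : Site d → ℕ → ℕ → ℂ := fun x j k =>
    (∏ s ∈ Finset.range k, a x s) * ((lam x j)⁻¹) ^ k with hβ
  have hβ0 : ∀ x j, β x j 0 = 1 := by
    intro x j
    simp [hβ]
  have hβn : ∀ x j, β x j (2 * d) = 1 := by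
    intro x j
    rw [hβ]
    dsimp only
    rw [inv_pow, hlamn]
    exact mul_inv_cancel₀ (hPne x)
  set γ : ℂ := ((Real.sqrt (2 * d) : ℝ) : ℂ)⁻¹ with hγ
  have hγconj : (starRingEnd ℂ) γ = γ := by
    rw [hγ, map_inv₀, Complex.conj_ofReal]
  have hγγ : γ * γ = (((2 * d : ℕ) : ℂ))⁻¹ := by
    rw [hγ, ← mul_inv, ← Complex.ofReal_mul, Real.mul_self_sqrt (by positivity)]
    congr 1
    push_cast
    ring
  set v : Site d → ℕ → WalkH d := fun x j =>
    γ • ∑ k ∈ Finset.range (2 * d), β x j k • bv d ((π ^ k) τ₀) (x + S k) with hv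
  -- the eigenvector equation
  have hkey1 : ∀ x j k, β x j k * a x k = lam x j * β x j (k + 1) := by
    intro x j k
    rw [hβ]
    dsimp only
    rw [Finset.prod_range_succ, pow_succ]
    have h5 : lam x j * (lam x j)⁻¹ = 1 := mul_inv_cancel₀ (hlamne x j)
    linear_combination (-(∏ s ∈ Finset.range k, a x s) * a x k * (lam x j)⁻¹ ^ k) * h5
  have heigen : ∀ x j, (D * U) (v x j) = lam x j • v x j := by
    intro x j
    rw [hv]
    dsimp only
    rw [map_smul, map_sum]
    have hF : ∀ k ∈ Finset.range (2 * d),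
        (D * U) (β x j k • bv d ((π ^ k) τ₀) (x + S k))
          = lam x j • (β x j (k + 1) • bv d ((π ^ (k + 1)) τ₀) (x + S (k + 1))) := by
      intro k _
      rw [map_smul, hDUpt x k, smul_smul, hkey1, ← smul_smul]
    rw [Finset.sum_congr rfl hF, ← Finset.smul_sum]
    have h3 : β x j (2 * d) • bv d ((π ^ (2 * d)) τ₀) (x + S (2 * d))
        = β x j 0 • bv d ((π ^ 0) τ₀) (x + S 0) := by
      rw [hβn, hβ0, hτn, hSn, hS0, pow_zero, Equiv.Perm.one_apply]
    have h1 := Finset.sum_range_succ'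
      (fun k => β x j k • bv d ((π ^ k) τ₀) (x + S k)) (2 * d)
    have h2 := Finset.sum_range_succ
      (fun k => β x j k • bv d ((π ^ k) τ₀) (x + S k)) (2 * d)
    have h4 : (∑ k ∈ Finset.range (2 * d), β x j (k + 1) • bv d ((π ^ (k + 1)) τ₀) (x + S (k + 1)))
          + β x j 0 • bv d ((π ^ 0) τ₀) (x + S 0)
        = (∑ k ∈ Finset.range (2 * d), β x j k • bv d ((π ^ k) τ₀) (x + S k))
          + β x j 0 • bv d ((π ^ 0) τ₀) (x + S 0) := by
      rw [← h1, h2, h3]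
    rw [add_right_cancel h4]
    rw [smul_comm]
  -- inner products
  have hcomb : ∀ (x x' : Site d) (g g' : ℕ → ℂ),
      ⟪∑ k ∈ Finset.range (2 * d), g k • bv d ((π ^ k) τ₀) (x + S k),
        ∑ m ∈ Finset.range (2 * d), g' m • bv d ((π ^ m) τ₀) (x' + S m)⟫_ℂ
      = if x = x' then ∑ k ∈ Finset.range (2 * d), (starRingEnd ℂ) (g k) * g' k else 0 := by
    have hone : ∀ (x x' : Site d) (g' : ℕ → ℂ) (k : ℕ), k ∈ Finset.range (2 * d) →
        ⟪bv d ((π ^ k) τ₀) (x + S k),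
          ∑ m ∈ Finset.range (2 * d), g' m • bv d ((π ^ m) τ₀) (x' + S m)⟫_ℂ
        = if x = x' then g' k else 0 := by
      intro x x' g' k hk
      rw [inner_sum]
      by_cases hxx : x = x'
      · subst hxx
        rw [if_pos rfl]
        rw [Finset.sum_eq_single_of_mem k hk]
        · rw [inner_smul_right, hip', if_pos rfl, mul_one]
        · intro m hm hne
          rw [inner_smul_right, hip', if_neg, mul_zero]
          intro hc
          exact hne (hptinj x x k m (Finset.mem_range.mp hk) (Finset.mem_range.mp hm) hc).1.symm
      · rw [if_neg hxx]
        refine Finset.sum_eq_zero fun m hm => ?_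
        rw [inner_smul_right, hip', if_neg, mul_zero]
        intro hc
        exact hxx (hptinj x x' k m (Finset.mem_range.mp hk) (Finset.mem_range.mp hm) hc).2
    intro x x' g g'
    rw [sum_inner]
    by_cases hxx : x = x'
    · subst hxx
      rw [if_pos rfl]
      refine Finset.sum_congr rfl fun k hk => ?_
      rw [inner_smul_left, hone x x g' k hk, if_pos rfl]
    · rw [if_neg hxx]
      refine Finset.sum_eq_zero fun k hk => ?_
      rw [inner_smul_left, hone x x' g' k hk, if_neg hxx, mul_zero]
  have hQabs : ∀ x k, ‖∏ s ∈ Finset.range k, a x s‖ = 1 := by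
    intro x k
    rw [norm_prod]
    exact Finset.prod_eq_one fun s _ => haabs x s
  have hββ : ∀ x j j' k, (starRingEnd ℂ) (β x j k) * β x j' k = (ω ^ j * (ω ^ j')⁻¹) ^ k := by
    intro x j j' k
    have hQ : (starRingEnd ℂ) (∏ s ∈ Finset.range k, a x s) * (∏ s ∈ Finset.range k, a x s)
        = 1 := by
      rw [mul_comm, Complex.mul_conj, Complex.normSq_eq_norm_sq, hQabs, one_pow, Complex.ofReal_one]
    have hlamj : lam x j * (lam x j')⁻¹ = ω ^ j * (ω ^ j')⁻¹ := by
      rw [hlam]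
      dsimp only
      rw [mul_inv]
      have h6 : μ x * (μ x)⁻¹ = 1 := mul_inv_cancel₀ (hμne x)
      linear_combination (ω ^ j * (ω ^ j')⁻¹) * h6
    rw [hβ]
    dsimp only
    calc (starRingEnd ℂ) ((∏ s ∈ Finset.range k, a x s) * ((lam x j)⁻¹) ^ k) *
          ((∏ s ∈ Finset.range k, a x s) * ((lam x j')⁻¹) ^ k)
        = ((starRingEnd ℂ) (∏ s ∈ Finset.range k, a x s) * (∏ s ∈ Finset.range k, a x s)) *
          (((starRingEnd ℂ) ((lam x j)⁻¹)) ^ k * ((lam x j')⁻¹) ^ k) := by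
          rw [map_mul, map_pow]
          ring
      _ = (lam x j * (lam x j')⁻¹) ^ k := by
          rw [hQ, one_mul, map_inv₀, hconjlam, inv_inv, ← mul_pow]
      _ = (ω ^ j * (ω ^ j')⁻¹) ^ k := by rw [hlamj]
  have hvinner : ∀ x x' j j', j < 2 * d → j' < 2 * d →
      ⟪v x j, v x' j'⟫_ℂ = if x = x' ∧ j = j' then 1 else 0 := by
    intro x x' j j' hj hj'
    rw [hv]
    dsimp only
    rw [inner_smul_left, inner_smul_right, hcomb, hγconj]
    by_cases hxx : x = x'
    · subst hxx
      rw [if_pos rfl]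
      by_cases hjj : j = j'
      · subst hjj
        rw [if_pos ⟨rfl, rfl⟩]
        have hone : ∀ k ∈ Finset.range (2 * d), (starRingEnd ℂ) (β x j k) * β x j k = 1 := by
          intro k _
          rw [hββ, mul_inv_cancel₀ (pow_ne_zero _ hωne), one_pow]
        rw [Finset.sum_congr rfl hone, Finset.sum_const, Finset.card_range, nsmul_eq_mul,
          mul_one, ← mul_assoc, hγγ, inv_mul_cancel₀ hn0']
      · rw [if_neg (fun hc => hjj hc.2)]
        have hζne : ω ^ j * (ω ^ j')⁻¹ ≠ 1 := by
          intro h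
          apply hjj
          apply hωprim.pow_inj hj hj'
          rw [← div_eq_mul_inv] at h
          exact div_eq_one_iff_eq (pow_ne_zero _ hωne) |>.mp h
        have hterms : ∀ k ∈ Finset.range (2 * d),
            (starRingEnd ℂ) (β x j k) * β x j' k = (ω ^ j * (ω ^ j')⁻¹) ^ k :=
          fun k _ => hββ x j j' k
        have hζn : (ω ^ j * (ω ^ j')⁻¹) ^ (2 * d) = 1 := by
          rw [mul_pow, ← pow_mul, mul_comm j (2 * d), pow_mul, hωn, one_pow, inv_pow, ← pow_mul,
            mul_comm j' (2 * d), pow_mul, hωn, one_pow, inv_one, mul_one]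
        rw [Finset.sum_congr rfl hterms, geom_sum_eq hζne, hζn, sub_self, zero_div,
          mul_zero, mul_zero]
    · rw [if_neg hxx, if_neg (fun hc => hxx hc.1), mul_zero, mul_zero]
  -- choose exponents for each coin
  choose κ hκlt hκeq using fun σ : Coin d => hπ σ τ₀
  set b : (Coin d × Site d) → WalkH d := fun p => v p.2 (κ p.1) with hb
  have hκinj : ∀ σ σ' : Coin d, κ σ = κ σ' → σ = σ' := by
    intro σ σ' h
    rw [← hκeq σ, ← hκeq σ', h]
  have honb : Orthonormal ℂ b := by
    rw [orthonormal_iff_ite]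
    intro p q
    rw [hb]
    dsimp only
    rw [hvinner p.2 q.2 (κ p.1) (κ q.1) (hκlt p.1) (hκlt q.1)]
    by_cases hpq : p = q
    · subst hpq
      rw [if_pos ⟨rfl, rfl⟩, if_pos rfl]
    · rw [if_neg hpq, if_neg]
      rintro ⟨h2, h1⟩
      exact hpq (Prod.ext (hκinj p.1 q.1 h1) h2)
  -- membership of the canonical basis vectors in the span of b
  have hbv_mem : ∀ (x : Site d) (k : ℕ), k < 2 * d →
      bv d ((π ^ k) τ₀) (x + S k) ∈ Submodule.span ℂ (Set.range b) := by
    intro x k hk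
    set W : Submodule ℂ (WalkH d) := Submodule.span ℂ
      (Set.range (fun k : Fin (2 * d) => bv d ((π ^ (k : ℕ)) τ₀) (x + S (k : ℕ)))) with hW
    have honW : Orthonormal ℂ (fun k : Fin (2 * d) => bv d ((π ^ (k : ℕ)) τ₀) (x + S (k : ℕ))) := by
      rw [orthonormal_iff_ite]
      intro i i'
      rw [hip']
      by_cases h : i = i'
      · subst h
        rw [if_pos rfl, if_pos rfl]
      · rw [if_neg h, if_neg]
        intro hc
        exact h (Fin.ext (hptinj x x i i' i.isLt i'.isLt hc).1)
    have honA : Orthonormal ℂ (fun σ : Coin d => b (σ, x)) := by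
      have := honb.comp (fun σ : Coin d => ((σ, x) : Coin d × Site d))
        (fun σ σ' h => (Prod.ext_iff.mp h).1)
      exact this
    have hAleW : ∀ σ : Coin d, b (σ, x) ∈ W := by
      intro σ
      rw [hb]
      dsimp only
      rw [hv]
      dsimp only
      apply Submodule.smul_mem
      apply Submodule.sum_mem
      intro m hm
      apply Submodule.smul_mem
      apply Submodule.subset_span
      exact ⟨⟨m, Finset.mem_range.mp hm⟩, rfl⟩
    haveI hWfin : FiniteDimensional ℂ W :=
      FiniteDimensional.span_of_finite ℂ (Set.finite_range _)
    set A : Submodule ℂ (WalkH d) :=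
      Submodule.span ℂ (Set.range (fun σ : Coin d => b (σ, x))) with hA
    have hAW : A ≤ W := Submodule.span_le.mpr (Set.range_subset_iff.mpr hAleW)
    have hrankW : Module.finrank ℂ W = 2 * d := by
      rw [hW, finrank_span_eq_card honW.linearIndependent]
      simp
    have hrankA : Module.finrank ℂ A = 2 * d := by
      rw [hA, finrank_span_eq_card honA.linearIndependent]
      exact Localized.coin_card d
    have hAeqW : A = W := Submodule.eq_of_le_of_finrank_le hAW (by rw [hrankA, hrankW])
    have h1 : bv d ((π ^ k) τ₀) (x + S k) ∈ W := Submodule.subset_span ⟨⟨k, hk⟩, rfl⟩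
    rw [← hAeqW] at h1
    have hle : A ≤ Submodule.span ℂ (Set.range b) := by
      rw [hA, Submodule.span_le]
      rintro _ ⟨σ, rfl⟩
      exact Submodule.subset_span ⟨(σ, x), rfl⟩
    exact hle h1
  have hsingle_le : Submodule.span ℂ (Set.range fun p : Coin d × Site d => bv d p.1 p.2)
      ≤ Submodule.span ℂ (Set.range b) := by
    rw [Submodule.span_le]
    rintro _ ⟨p, rfl⟩
    have h1 : bv d p.1 p.2
        = bv d ((π ^ (κ p.1)) τ₀) ((p.2 - S (κ p.1)) + S (κ p.1)) := by
      rw [hκeq, sub_add_cancel]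
    show bv d p.1 p.2 ∈ Submodule.span ℂ (Set.range b)
    rw [h1]
    exact hbv_mem _ _ (hκlt _)
  have hdense_b : (Submodule.span ℂ (Set.range b)).topologicalClosure = ⊤ := by
    apply le_antisymm le_top
    rw [← dspan0]
    exact Submodule.topologicalClosure_mono hsingle_le
  refine ⟨⟨{p : Coin d × Site d | p.1 = τ₀}, ?_, ?_⟩,
    ⟨b, honb, fun i => ⟨lam i.2 (κ i.1), by rw [hb]; exact heigen i.2 (κ i.1)⟩, hdense_b⟩⟩
  · rintro ⟨p1, x⟩ hp ⟨q1, x'⟩ hq hpq u hu w hw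
    have hp1 : p1 = τ₀ := hp
    have hq1 : q1 = τ₀ := hq
    subst hp1
    subst hq1
    have hx : x ≠ x' := fun h => hpq (by rw [h])
    have hortho : Submodule.IsOrtho (cycSubspace d π τ₀ x) (cycSubspace d π τ₀ x') := by
      simp only [cycSubspace]
      rw [Submodule.isOrtho_span]
      rintro u ⟨k, hk, rfl⟩ w ⟨m, hm, rfl⟩
      rw [hip', if_neg]
      intro hc
      exact hx (hptinj x x' k m hk hm hc).2
    exact (Submodule.isOrtho_iff_inner_eq.mp hortho) u hu w hw
  · apply le_antisymm le_top
    rw [← dspan0]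
    apply Submodule.topologicalClosure_mono
    rw [Submodule.span_le]
    rintro _ ⟨p, rfl⟩
    have hmem : bv d p.1 p.2 ∈ cycSubspace d π τ₀ (p.2 - S (κ p.1)) := by
      apply Submodule.subset_span
      refine ⟨κ p.1, hκlt p.1, ?_⟩
      rw [hκeq, sub_add_cancel]
    have hle : cycSubspace d π τ₀ (p.2 - S (κ p.1))
        ≤ ⨆ q ∈ {q : Coin d × Site d | q.1 = τ₀}, cycSubspace d π q.1 q.2 := by
      have h2 := le_iSup₂ (f := fun (q : Coin d × Site d)
        (_ : q ∈ {q : Coin d × Site d | q.1 = τ₀}) => cycSubspace d π q.1 q.2)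
        ((τ₀, p.2 - S (κ p.1)) : Coin d × Site d) rfl
      exact h2
    exact hle hmem
end
end

section
/- For the fully localized walk U_D(C_π) with π a 2d-cycle, propagation is completely suppressed: for any basis vector |τ,x⟩ and any n ∈ ℤ, the vector U_D(C_π)^n |τ,x⟩ is supported on lattice sites y with |y − x| ≤ 2d − 1 (max norm), uniformly in n. More generally any finitely supported initial state remains supported in a fixed finite set for all times. -/
noncomputable section
open scoped InnerProductSpace ENNReal

/- ### Auxiliary lemmas -/

lemma norm_jump_le (d : ℕ) (τ : Coin d) : ‖jump d τ‖ ≤ 1 := by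
  apply pi_norm_le_iff_of_nonneg zero_le_one |>.2
  intro i
  simp only [jump, Pi.smul_apply, Pi.single_apply, smul_ite, smul_zero]
  split_ifs <;> simp

lemma sum_jump (d : ℕ) : ∑ σ : Coin d, jump d σ = 0 := by
  simp only [jump]; rw [Fintype.sum_prod_type]; simp [Fintype.sum_bool]

lemma disp_bound (d : ℕ) (π : Equiv.Perm (Coin d)) (τ : Coin d) (m : ℕ) :
    ‖∑ k ∈ Finset.range m, jump d ((π ^ (k+1)) τ)‖ ≤ (m : ℝ) := by
  calc ‖∑ k ∈ Finset.range m, jump d ((π ^ (k+1)) τ)‖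
      ≤ ∑ k ∈ Finset.range m, ‖jump d ((π ^ (k+1)) τ)‖ := norm_sum_le _ _
    _ ≤ ∑ _k ∈ Finset.range m, 1 := Finset.sum_le_sum (fun k _ => norm_jump_le d _)
    _ = m := by simp

section cycle
variable (d : ℕ) (π : Equiv.Perm (Coin d))
  (hπ : ∀ σ τ : Coin d, ∃ k < 2 * d, (π ^ k) τ = σ)

include hπ

lemma orbit_bij (τ : Coin d) : Function.Bijective (fun k : Fin (2*d) => (π ^ (k:ℕ)) τ) := by
  rw [Fintype.bijective_iff_surjective_and_card]
  constructor
  · intro σ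
    obtain ⟨k, hk, hkτ⟩ := hπ σ τ
    exact ⟨⟨k, hk⟩, hkτ⟩
  · simp [Fintype.card_prod, mul_comm]

lemma pow_2d_fixes (τ : Coin d) : (π ^ (2*d)) τ = τ := by
  obtain ⟨k, hk, hkτ⟩ := hπ ((π ^ (2*d)) τ) τ
  have h2 : (π ^ (2*d - k)) τ = τ := by
    have : (π ^ k) ((π ^ (2*d - k)) τ) = (π ^ k) τ := by
      rw [← Equiv.Perm.mul_apply, ← pow_add, Nat.add_sub_cancel' hk.le, hkτ]
    exact (π ^ k).injective this
  rcases Nat.eq_zero_or_pos k with h0 | hpos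
  · rw [← hkτ, h0, pow_zero]; rfl
  · exfalso
    have hlt : 2*d - k < 2*d := Nat.sub_lt (lt_of_le_of_lt (Nat.zero_le k) hk) hpos
    have hinj := (orbit_bij d π hπ τ).injective
    have : (⟨2*d - k, hlt⟩ : Fin (2*d)) = ⟨0, lt_of_le_of_lt (Nat.zero_le k) hk⟩ := by
      apply hinj
      simpa using h2
    have := Fin.mk.injEq .. ▸ this
    omega

lemma disp_period (τ : Coin d) :
    ∑ k ∈ Finset.range (2*d), jump d ((π ^ (k+1)) τ) = 0 := by
  have hb := orbit_bij d π hπ (π τ)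
  have : ∑ k ∈ Finset.range (2*d), jump d ((π ^ (k+1)) τ)
      = ∑ k : Fin (2*d), jump d ((π ^ ((k:ℕ)+1)) τ) := (Fin.sum_univ_eq_sum_range _ _).symm
  rw [this]
  have heq : ∀ k : Fin (2*d), (π ^ ((k:ℕ)+1)) τ = (π ^ (k:ℕ)) (π τ) := by
    intro k; rw [pow_succ, Equiv.Perm.mul_apply]
  simp_rw [heq]
  rw [Fintype.sum_bijective _ hb _ (fun σ => jump d σ) (fun _ => rfl)]
  exact sum_jump d

end cycle

lemma eig_zpow (d : ℕ) (u : unitary (WalkH d →L[ℂ] WalkH d)) (v : WalkH d) (c : ℂ)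
    (hc : c ≠ 0) (h : (u : WalkH d →L[ℂ] WalkH d) v = c • v) :
    ∀ q : ℤ, ((u ^ q : unitary (WalkH d →L[ℂ] WalkH d)) : WalkH d →L[ℂ] WalkH d) v
      = c ^ q • v := by
  have hinv : ((u⁻¹ : unitary (WalkH d →L[ℂ] WalkH d)) : WalkH d →L[ℂ] WalkH d) v
      = c⁻¹ • v := by
    have h1 : ((u⁻¹ : unitary _) : WalkH d →L[ℂ] WalkH d)
        ((u : WalkH d →L[ℂ] WalkH d) v) = v := by
      rw [← ContinuousLinearMap.mul_apply, ← Submonoid.coe_mul, inv_mul_cancel]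
      rfl
    rw [h, map_smul] at h1
    calc ((u⁻¹ : unitary _) : WalkH d →L[ℂ] WalkH d) v
        = c⁻¹ • (c • ((u⁻¹ : unitary _) : WalkH d →L[ℂ] WalkH d) v) := by
          rw [smul_smul, inv_mul_cancel₀ hc, one_smul]
      _ = c⁻¹ • v := by rw [h1]
  intro q
  induction q using Int.induction_on with
  | zero => rw [zpow_zero, zpow_zero, one_smul, OneMemClass.coe_one, ContinuousLinearMap.one_apply]
  | succ k ih =>
      have : u ^ ((k:ℤ) + 1) = u ^ (k:ℤ) * u := by rw [zpow_add_one]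
      rw [this, Submonoid.coe_mul, ContinuousLinearMap.mul_apply, h, map_smul, ih, smul_smul]
      congr 1
      rw [zpow_add_one₀ hc]; ring
  | pred k ih =>
      have : u ^ (-(k:ℤ) - 1) = u ^ (-(k:ℤ)) * u⁻¹ := by
        rw [← zpow_neg_one, ← zpow_add]; ring_nf
      rw [this, Submonoid.coe_mul, ContinuousLinearMap.mul_apply, hinv, map_smul, ih, smul_smul]
      congr 1
      rw [zpow_sub_one₀ hc]; ring

set_option maxHeartbeats 1000000 in
/-- the fully localized walk does not propagate: for all n ∈ ℤ,
W^n|τ,x⟩ is supported on sites y with |y−x| ≤ 2d−1, and any finitely supported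
initial state stays supported in a fixed finite set of sites for all times. -/
theorem fully_localized_walk_no_propagation (d : ℕ) (hd : 1 ≤ d) (π : Equiv.Perm (Coin d))
    (hπ : ∀ σ τ : Coin d, ∃ k < 2 * d, (π ^ k) τ = σ)
    (W : unitary (WalkH d →L[ℂ] WalkH d))
    (D U : WalkH d →L[ℂ] WalkH d)
    (hW : (W : WalkH d →L[ℂ] WalkH d) = D * U)
    (hD : ∀ (τ : Coin d) (x : Site d), ∃ θ : ℝ,
      D (bv d τ x) = Complex.exp (Complex.I * θ) • bv d τ x)
    (hU : ∀ (σ : Coin d) (y : Site d),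
      U (bv d σ y) = ∑ τ : Coin d, permCoin d π τ σ • bv d τ (y + jump d τ)) :
    (∀ (n : ℤ) (τ : Coin d) (x : Site d) (σ : Coin d) (y : Site d),
      (2 * d - 1 : ℝ) < ‖y - x‖ →
      ⟪bv d σ y, ((W ^ n : unitary (WalkH d →L[ℂ] WalkH d)) :
        WalkH d →L[ℂ] WalkH d) (bv d τ x)⟫_ℂ = 0) ∧
    ∀ ψ : WalkH d,
      (∃ F : Finset (Site d), ∀ (σ : Coin d) (z : Site d), z ∉ F → ⟪bv d σ z, ψ⟫_ℂ = 0) →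
      ∃ F' : Finset (Site d), ∀ (n : ℤ) (σ : Coin d) (z : Site d), z ∉ F' →
        ⟪bv d σ z, ((W ^ n : unitary (WalkH d →L[ℂ] WalkH d)) :
          WalkH d →L[ℂ] WalkH d) ψ⟫_ℂ = 0 := by
  -- one step of the walk
  have step : ∀ (τ : Coin d) (x : Site d), ∃ c : ℂ, c ≠ 0 ∧
      (W : WalkH d →L[ℂ] WalkH d) (bv d τ x) = c • bv d (π τ) (x + jump d (π τ)) := by
    intro τ x
    obtain ⟨θ, hθ⟩ := hD (π τ) (x + jump d (π τ))
    refine ⟨Complex.exp (Complex.I * θ), Complex.exp_ne_zero _, ?_⟩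
    have hUs : U (bv d τ x) = bv d (π τ) (x + jump d (π τ)) := by
      rw [hU]
      simp only [permCoin, ite_smul, one_smul, zero_smul]
      rw [Finset.sum_ite_eq' Finset.univ (π τ)]
      simp
    rw [hW, ContinuousLinearMap.mul_apply, hUs, hθ]
  -- natural powers
  have pownat : ∀ (n : ℕ) (τ : Coin d) (x : Site d), ∃ c : ℂ, c ≠ 0 ∧
      ((W ^ n : unitary (WalkH d →L[ℂ] WalkH d)) : WalkH d →L[ℂ] WalkH d) (bv d τ x)
        = c • bv d ((π ^ n) τ) (x + ∑ k ∈ Finset.range n, jump d ((π ^ (k+1)) τ)) := by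
    intro n
    induction n with
    | zero =>
      intro τ x
      refine ⟨1, one_ne_zero, ?_⟩
      rw [pow_zero, pow_zero, OneMemClass.coe_one, ContinuousLinearMap.one_apply, one_smul,
        Finset.range_zero, Finset.sum_empty, add_zero, Equiv.Perm.one_apply]
    | succ n ih =>
      intro τ x
      obtain ⟨c, hc, heq⟩ := ih τ x
      obtain ⟨c', hc', heq'⟩ := step ((π ^ n) τ) (x + ∑ k ∈ Finset.range n, jump d ((π ^ (k+1)) τ))
      refine ⟨c * c', mul_ne_zero hc hc', ?_⟩
      have hcoin : π ((π ^ n) τ) = (π ^ (n+1)) τ := by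
        rw [pow_succ']; rfl
      rw [pow_succ', Submonoid.coe_mul, ContinuousLinearMap.mul_apply, heq, map_smul, heq',
        smul_smul, hcoin, Finset.sum_range_succ, ← add_assoc]
  -- main localization lemma for integer powers
  have main : ∀ (n : ℤ) (τ : Coin d) (x : Site d), ∃ (c : ℂ) (σ : Coin d) (y : Site d),
      ‖y - x‖ ≤ 2*(d:ℝ) - 1 ∧
      ((W ^ n : unitary (WalkH d →L[ℂ] WalkH d)) : WalkH d →L[ℂ] WalkH d) (bv d τ x)
        = c • bv d σ y := by
    intro n τ x
    obtain ⟨q, r, hr0, hrlt, hn⟩ : ∃ q r : ℤ, 0 ≤ r ∧ r < 2*(d:ℤ) ∧ n = 2*(d:ℤ) * q + r :=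
      ⟨n / (2*(d:ℤ)), n % (2*(d:ℤ)), Int.emod_nonneg n (by omega),
        Int.emod_lt_of_pos n (by omega), (Int.mul_ediv_add_emod n (2*(d:ℤ))).symm⟩
    have hsplit : W ^ n = (W ^ (2*d)) ^ q * W ^ (r.toNat) := by
      rw [← zpow_natCast W r.toNat, Int.toNat_of_nonneg hr0, ← zpow_natCast W (2*d),
        ← zpow_mul, ← zpow_add]
      have hexp : ((2*d : ℕ) : ℤ) * q + r = n := by push_cast; linarith [hn]
      rw [hexp]
    obtain ⟨c1, hc1, heq1⟩ := pownat r.toNat τ x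
    obtain ⟨c2, hc2, heq2⟩ := pownat (2*d) ((π ^ r.toNat) τ)
      (x + ∑ k ∈ Finset.range r.toNat, jump d ((π ^ (k+1)) τ))
    rw [pow_2d_fixes d π hπ _, disp_period d π hπ _, add_zero] at heq2
    have heig := eig_zpow d (W ^ (2*d)) _ c2 hc2 heq2 q
    refine ⟨c1 * c2 ^ q, (π ^ r.toNat) τ,
      x + ∑ k ∈ Finset.range r.toNat, jump d ((π ^ (k+1)) τ), ?_, ?_⟩
    · rw [add_sub_cancel_left]
      refine (disp_bound d π τ r.toNat).trans ?_
      have h3 : r.toNat + 1 ≤ 2*d := by omega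
      have h4 : ((r.toNat + 1 : ℕ) : ℝ) ≤ ((2*d : ℕ) : ℝ) := Nat.cast_le.2 h3
      push_cast at h4
      linarith
    · rw [hsplit, Submonoid.coe_mul, ContinuousLinearMap.mul_apply, heq1, map_smul, heig,
        smul_smul]
  constructor
  · -- part 1
    intro n τ x σ y hxy
    obtain ⟨c, σ', y', hle, heq⟩ := main n τ x
    rw [heq, inner_smul_right]
    have hne : ((σ, y) : Coin d × Site d) ≠ (σ', y') := by
      intro h
      have hy : y = y' := congrArg Prod.snd h
      rw [hy] at hxy
      linarith
    rw [bv, bv, lp.inner_single_left, lp.single_apply_ne 2 _ _ hne, inner_zero_right, mul_zero]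
  · -- part 2
    rintro ψ ⟨F, hF⟩
    refine ⟨F.biUnion (fun w => Fintype.piFinset
      (fun i => Finset.Icc (w i - (2*(d:ℤ) - 1)) (w i + (2*(d:ℤ) - 1)))), ?_⟩
    intro n σ z hz
    have hadjeq : ContinuousLinearMap.adjoint
        ((W ^ n : unitary (WalkH d →L[ℂ] WalkH d)) : WalkH d →L[ℂ] WalkH d)
        = ((W ^ (-n) : unitary (WalkH d →L[ℂ] WalkH d)) : WalkH d →L[ℂ] WalkH d) := by
      rw [← ContinuousLinearMap.star_eq_adjoint, ← Unitary.coe_star, Unitary.star_eq_inv,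
        zpow_neg]
    have hadj : ⟪bv d σ z, ((W ^ n : unitary (WalkH d →L[ℂ] WalkH d)) :
          WalkH d →L[ℂ] WalkH d) ψ⟫_ℂ
        = ⟪((W ^ (-n) : unitary (WalkH d →L[ℂ] WalkH d)) :
          WalkH d →L[ℂ] WalkH d) (bv d σ z), ψ⟫_ℂ := by
      rw [← ContinuousLinearMap.adjoint_inner_left, hadjeq]
    obtain ⟨c, σ', z', hle, heq⟩ := main (-n) σ z
    rw [hadj, heq, inner_smul_left]
    have hz' : z' ∉ F := by
      intro hmem
      apply hz
      refine Finset.mem_biUnion.2 ⟨z', hmem, ?_⟩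
      rw [Fintype.mem_piFinset]
      intro i
      rw [Finset.mem_Icc]
      have h1 : ‖(z' - z) i‖ ≤ ‖z' - z‖ := norm_le_pi_norm _ i
      have h2 : ‖(z' - z) i‖ = |((z' i - z i : ℤ) : ℝ)| := by
        rw [Pi.sub_apply, Int.norm_eq_abs]
      have h3 : |((z' i - z i : ℤ) : ℝ)| ≤ 2*(d:ℝ) - 1 := h2 ▸ (h1.trans hle)
      have h4 : |z' i - z i| ≤ 2*(d:ℤ) - 1 := by exact_mod_cast h3
      rw [abs_le] at h4
      omega
    rw [hF σ' z' hz', mul_zero]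
end
end
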